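/- Let N ≥ 1, m ≥ 0 and Γ ≥ 0 be integers and let S_1,…,S_m ⊆ {1,…,N}. Define K = N vectors x^1,…,x^N ∈ {0,1}^m by x^k_i = 1 if k ∈ S_i and x^k_i = 0 otherwise. With nominal costs ĉ = 0 ∈ ℝ^m and deviations d = (1,…,1) ∈ ℝ^m, the worst-case cost max over c ∈ U^Γ(ĉ,d) of min over k ∈ {1,…,N} of c^⊤x^k is at least 1 if and only if there exists an index set I ⊆ {1,…,m} with |I| ≤ Γ and ⋃_{i∈I} S_i = {1,…,N}. -/
import Mathlib


open Finset

/-- The discrete budgeted uncertainty set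
`U^Γ(ĉ,d) = { c : c i = ĉ i + δ i * d i, δ ∈ {0,1}^n, ∑ i, δ i ≤ Γ }`,
with the 0-1 vector `δ` identified with the set `D` of its nonzero coordinates. -/
noncomputable def budgetU (n : ℕ) (chat d : Fin n → ℝ) (Γ : ℕ) : Finset (Fin n → ℝ) :=
  (((Finset.univ : Finset (Fin n)).powerset.filter fun D => D.card ≤ Γ).image
    fun D i => chat i + (if i ∈ D then d i else 0))

lemma budgetU_nonempty (n : ℕ) (chat d : Fin n → ℝ) (Γ : ℕ) :
    (budgetU n chat d Γ).Nonempty :=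
  ⟨_, Finset.mem_image.mpr ⟨∅, by simp, rfl⟩⟩

lemma key_sum_eq (m N : ℕ) (D : Finset (Fin m)) (S : Fin m → Finset (Fin N)) (k : Fin N) :
    ∑ i, ((fun _ => (0:ℝ)) i + (if i ∈ D then (1:ℝ) else 0)) * (if k ∈ S i then 1 else 0)
      = ((D.filter fun i => k ∈ S i).card : ℝ) := by
  rw [Finset.card_filter]
  push_cast
  simp only [zero_add, ite_mul, one_mul, zero_mul, Finset.sum_ite_mem, Finset.univ_inter]

/-- correctness of the reduction from set cover to evaluating the
objective function of the min-max-min problem.  With `x^k_i = 1` iff `k ∈ S i`,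
nominal costs `0` and unit deviations, the worst-case cost of `(x^1,…,x^N)` is at
least `1` iff at most `Γ` of the sets `S i` cover `{1,…,N}`. -/
theorem set_cover_reduction (N m Γ : ℕ) (hN : 1 ≤ N)
    (S : Fin m → Finset (Fin N)) :
    (1 : ℝ) ≤
      ((budgetU m (fun _ => 0) (fun _ => 1) Γ).sup' (budgetU_nonempty _ _ _ _)
        fun c => Finset.univ.inf' (Finset.univ_nonempty_iff.mpr ⟨⟨0, hN⟩⟩)
          fun k : Fin N => ∑ i, c i * (if k ∈ S i then 1 else 0)) ↔
    ∃ I : Finset (Fin m), I.card ≤ Γ ∧ I.biUnion S = Finset.univ := by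
  rw [Finset.le_sup'_iff]
  constructor
  · rintro ⟨c, hc, hle⟩
    obtain ⟨D, hD, rfl⟩ := Finset.mem_image.mp hc
    rw [Finset.mem_filter] at hD
    refine ⟨D, hD.2, Finset.eq_univ_iff_forall.mpr fun k => ?_⟩
    have h1 := (Finset.le_inf'_iff _ _).mp hle k (Finset.mem_univ k)
    rw [key_sum_eq] at h1
    have : (D.filter fun i => k ∈ S i).Nonempty := by
      rw [← Finset.card_pos]
      exact_mod_cast Nat.cast_pos.mp (lt_of_lt_of_le one_pos h1)
    obtain ⟨i, hi⟩ := this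
    rw [Finset.mem_filter] at hi
    exact Finset.mem_biUnion.mpr ⟨i, hi.1, hi.2⟩
  · rintro ⟨I, hcard, hcov⟩
    refine ⟨fun i => (fun _ => (0:ℝ)) i + (if i ∈ I then (1:ℝ) else 0),
      Finset.mem_image.mpr ⟨I, Finset.mem_filter.mpr
        ⟨Finset.mem_powerset.mpr (Finset.subset_univ I), hcard⟩, rfl⟩, ?_⟩
    rw [Finset.le_inf'_iff]
    intro k _
    rw [key_sum_eq]
    have : k ∈ I.biUnion S := hcov ▸ Finset.mem_univ k
    obtain ⟨i, hiI, hik⟩ := Finset.mem_biUnion.mp this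
    have : (I.filter fun i => k ∈ S i).Nonempty := ⟨i, Finset.mem_filter.mpr ⟨hiI, hik⟩⟩
    exact_mod_cast Nat.one_le_cast.mpr (Finset.card_pos.mpr this)
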